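/- Let H ≤ F_{2^m}^× be a subgroup not contained in any proper subfield of F_{2^m}, and let S ≤ GL(3m, 2) be the group of F_2-linear maps {x ↦ ax : a ∈ H} acting on F_{2^{3m}}. Then the normalizer of S in GL(3m, 2) equals ΓL(3, 2^m), realized as the set of invertible maps of the form x ↦ c_k x^{2^k} + c_{k+m} x^{2^{k+m}} + c_{k+2m} x^{2^{k+2m}} with c_i ∈ F_{2^{3m}}. -/

import Mathlib

open Finset

private lemma aux_pow_mul {K : Type*} [Monoid K] (a : K) {d : ℕ} (h : a ^ 2 ^ d = a) :
    ∀ q, a ^ 2 ^ (d * q) = a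
  | 0 => by simp
  | q + 1 => by
    rw [Nat.mul_succ, pow_add, pow_mul, aux_pow_mul a h q, h]

private lemma aux_gcd {K : Type*} [Monoid K] (a : K) (d e : ℕ) (hd : a ^ 2 ^ d = a)
    (he : a ^ 2 ^ e = a) : a ^ 2 ^ Nat.gcd d e = a := by
  revert hd he
  induction d, e using Nat.gcd.induction with
  | H0 e => intro _ he; simpa using he
  | H1 d e hpos ih =>
    intro hd he
    rw [Nat.gcd_rec]
    refine ih ?_ hd
    have h3 : (a ^ 2 ^ (d * (e / d))) ^ 2 ^ (e % d) = a := by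
      rw [← pow_mul, ← pow_add, Nat.div_add_mod]
      exact he
    rwa [aux_pow_mul a hd] at h3

private lemma frob_inj {K : Type*} [Field K] [CharP K 2] (k : ℕ) :
    Function.Injective fun x : K => x ^ 2 ^ k := by
  haveI : Fact (Nat.Prime 2) := ⟨Nat.prime_two⟩
  intro x y h
  apply (iterateFrobenius K 2 k).injective
  rwa [iterateFrobenius_def, iterateFrobenius_def]

private lemma pow_maps_ne {K : Type*} [Field K] [Fintype K] [CharP K 2] {n : ℕ}
    (hcard : Fintype.card K = 2 ^ n) {i j : ℕ} (hij : i < j) (hj : j < n)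
    (h : ∀ x : K, x ^ 2 ^ i = x ^ 2 ^ j) : False := by
  classical
  set d := j - i with hd
  have hd0 : 0 < d := by omega
  have hpow : ∀ x : K, x ^ 2 ^ d = x := by
    intro x
    apply frob_inj i
    show (x ^ 2 ^ d) ^ 2 ^ i = x ^ 2 ^ i
    rw [← pow_mul, ← pow_add, show d + i = j by omega]
    exact (h x).symm
  obtain ⟨g, hg⟩ := IsCyclic.exists_generator (α := Kˣ)
  have hog : orderOf g = 2 ^ n - 1 := by
    rw [orderOf_eq_card_of_forall_mem_zpowers hg, Nat.card_eq_fintype_card,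
      Fintype.card_units, hcard]
  have hgpow : g ^ 2 ^ d = g := by
    ext
    rw [Units.val_pow_eq_pow_val]
    exact hpow _
  have hone : g ^ (2 ^ d - 1) = 1 := by
    have h2 : g ^ (2 ^ d - 1) * g = 1 * g := by
      rw [one_mul, ← pow_succ, show 2 ^ d - 1 + 1 = 2 ^ d from by
        have := Nat.one_le_two_pow (n := d); omega]
      exact hgpow
    exact mul_right_cancel h2
  have hdvd : 2 ^ n - 1 ∣ 2 ^ d - 1 := hog ▸ orderOf_dvd_of_pow_eq_one hone
  have hlt : (2:ℕ) ^ d < 2 ^ n := Nat.pow_lt_pow_right one_lt_two (by omega)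
  have h1d := Nat.one_le_two_pow (n := d)
  have hpos : 0 < 2 ^ d - 1 := by
    have : (2:ℕ) ^ 1 ≤ 2 ^ d := Nat.pow_le_pow_right (by norm_num) hd0
    omega
  exact absurd (Nat.le_of_dvd hpos hdvd) (by omega)

private lemma lin_ind {K : Type*} [Field K] [Fintype K] [CharP K 2] {n : ℕ}
    (hcard : Fintype.card K = 2 ^ n) (c : ℕ → K)
    (h : ∀ x : K, ∑ j ∈ range n, c j * x ^ 2 ^ j = 0) : ∀ j < n, c j = 0 := by
  have hLI : LinearIndependent K
      (fun j : Fin n => ((powMonoidHom (2 ^ (j : ℕ)) : K →* K) : K → K)) := by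
    apply (linearIndependent_monoidHom K K).comp
    intro i j hij
    by_contra hne
    have hfun : ∀ x : K, x ^ 2 ^ (i : ℕ) = x ^ 2 ^ (j : ℕ) :=
      fun x => DFunLike.congr_fun hij x
    rcases Nat.lt_or_ge (i : ℕ) (j : ℕ) with hlt | hge
    · exact pow_maps_ne hcard hlt j.isLt hfun
    · have hlt : (j : ℕ) < (i : ℕ) := by
        rcases Nat.lt_or_ge (j : ℕ) (i : ℕ) with h' | h'
        · exact h'
        · exact absurd (Fin.ext (Nat.le_antisymm h' hge)) hne
      exact pow_maps_ne hcard hlt i.isLt (fun x => (hfun x).symm)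
  intro j hj
  exact Fintype.linearIndependent_iff.mp hLI (fun i : Fin n => c i) (by
    funext x
    have hx := h x
    rw [← Fin.sum_univ_eq_sum_range (fun j => c j * x ^ 2 ^ j) n] at hx
    simpa [Finset.sum_apply, powMonoidHom] using hx) ⟨j, hj⟩

private lemma addhom_rep {K : Type*} [Field K] [Fintype K] [CharP K 2] {n : ℕ}
    (hcard : Fintype.card K = 2 ^ n) (f : K →+ K) :
    ∃ c : ℕ → K, ∀ x, f x = ∑ j ∈ range n, c j * x ^ 2 ^ j := by
  classical
  haveI : Fact (Nat.Prime 2) := ⟨Nat.prime_two⟩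
  letI : Module (ZMod 2) K := AddCommGroup.zmodModule
    (fun x => by rw [two_nsmul]; exact CharTwo.add_self_eq_zero x)
  haveI : Module.Finite (ZMod 2) K := Module.finite_iff_finite.mpr inferInstance
  have hrank : Module.finrank (ZMod 2) K = n := by
    have h1 : Fintype.card K = Fintype.card (ZMod 2) ^ Module.finrank (ZMod 2) K :=
      Module.card_eq_pow_finrank
    rw [ZMod.card, hcard] at h1
    exact Nat.pow_right_injective le_rfl h1.symm
  let b : Module.Basis (Fin n) (ZMod 2) K := Module.finBasisOfFinrankEq (ZMod 2) K hrank
  let e1 : (K →+ K) ≃ (K →ₗ[ZMod 2] K) :=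
    { toFun := fun g => g.toZModLinearMap 2
      invFun := fun g => g.toAddMonoidHom
      left_inv := fun g => rfl
      right_inv := fun g => rfl }
  let e : (K →+ K) ≃ (Fin n → Fin n → ZMod 2) :=
    (e1.trans (LinearMap.toMatrix b b).toEquiv).trans Matrix.of.symm
  haveI : Fintype (K →+ K) := Fintype.ofEquiv _ e.symm
  -- extension of a `Fin n`-indexed family to `ℕ`
  let ext : (Fin n → K) → ℕ → K := fun c j => if h : j < n then c ⟨j, h⟩ else 0
  have hext : ∀ (c : Fin n → K) (x : K),
      ∑ j : Fin n, c j * x ^ 2 ^ (j : ℕ) = ∑ j ∈ range n, ext c j * x ^ 2 ^ j := by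
    intro c x
    have hfs := Fin.sum_univ_eq_sum_range (fun j => ext c j * x ^ 2 ^ j) n
    rw [← hfs]
    exact Finset.sum_congr rfl fun j _ => by simp [ext, j.isLt]
  let Φ : (Fin n → K) → (K →+ K) := fun c =>
    { toFun := fun x => ∑ j : Fin n, c j * x ^ 2 ^ (j : ℕ)
      map_zero' := Finset.sum_eq_zero fun j _ => by
        rw [zero_pow (Nat.two_pow_pos ((j : ℕ))).ne', mul_zero]
      map_add' := fun x y => by
        show ∑ j : Fin n, c j * (x + y) ^ 2 ^ (j : ℕ)
            = ∑ j : Fin n, c j * x ^ 2 ^ (j : ℕ) + ∑ j : Fin n, c j * y ^ 2 ^ (j : ℕ)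
        rw [← Finset.sum_add_distrib]
        exact Finset.sum_congr rfl fun j _ => by
          rw [add_pow_char_pow, mul_add] }
  have hinj : Function.Injective Φ := by
    intro c c' hcc
    have h0 : ∀ x : K, ∑ j ∈ range n, (ext c j - ext c' j) * x ^ 2 ^ j = 0 := by
      intro x
      have hx : (Φ c) x = (Φ c') x := by rw [hcc]
      have hx' : ∑ j ∈ range n, ext c j * x ^ 2 ^ j = ∑ j ∈ range n, ext c' j * x ^ 2 ^ j := by
        rw [← hext, ← hext]; exact hx
      rw [← sub_eq_zero] at hx'
      rw [← hx', ← Finset.sum_sub_distrib]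
      exact Finset.sum_congr rfl fun j _ => by ring
    have hz := lin_ind hcard _ h0
    funext j
    have := hz (j : ℕ) j.isLt
    have hsimp : ext c (j : ℕ) - ext c' (j : ℕ) = c j - c' j := by
      simp [ext, j.isLt]
    rw [hsimp] at this
    exact sub_eq_zero.mp this
  have hcards : Fintype.card (Fin n → K) = Fintype.card (K →+ K) := by
    rw [Fintype.card_congr e]
    simp [Fintype.card_fun, hcard, ZMod.card, ← pow_mul, mul_comm]
  obtain ⟨c, hc⟩ :=
    ((Fintype.bijective_iff_injective_and_card Φ).mpr ⟨hinj, hcards⟩).surjective f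
  refine ⟨ext c, fun x => ?_⟩
  rw [← hc]
  exact hext c x

/-- let `H ≤ F_{2^m}^×` be a subgroup not contained in a proper
subfield of `F_{2^m}`, acting by scalar multiplication on `K = F_{2^{3m}}`. An
(additive, i.e. `F_2`-linear) automorphism `L` of `K` normalizes this group of
scalar multiplications iff `L ∈ ΓL(3, 2^m)`, i.e. `L` is of the form
`x ↦ c₀ x^{2^k} + c₁ x^{2^{k+m}} + c₂ x^{2^{k+2m}}`. -/
theorem stmt14 (m : ℕ) (hm : 0 < m)
    (K : Type*) [Field K] [Fintype K] [CharP K 2]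
    (hcard : Fintype.card K = 2 ^ (3 * m))
    (H : Subgroup Kˣ)
    -- H is contained in F_{2^m}^×
    (hHm : ∀ a ∈ H, (a : K) ^ (2 ^ m) = (a : K))
    -- H is not contained in any proper subfield of F_{2^m}
    (hgen : ∀ l, l ∣ m → (∀ a ∈ H, (a : K) ^ (2 ^ l) = (a : K)) → l = m)
    (L : K ≃+ K) :
    -- L normalizes the group of scalar multiplications by elements of H ...
    ((∀ a ∈ H, ∃ a' ∈ H, ∀ x : K, L ((a : K) * x) = (a' : K) * L x) ∧
     (∀ a' ∈ H, ∃ a ∈ H, ∀ x : K, L ((a : K) * x) = (a' : K) * L x)) ↔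
    -- ... iff L belongs to ΓL(3, 2^m)
    ∃ (k : ℕ) (c₀ c₁ c₂ : K), ∀ x : K,
      L x = c₀ * x ^ 2 ^ k + c₁ * x ^ 2 ^ (k + m) + c₂ * x ^ 2 ^ (k + 2 * m) := by
  classical
  set n := 3 * m with hn
  constructor
  · rintro ⟨h1, -⟩
    obtain ⟨cc, hcc0⟩ := addhom_rep hcard L.toAddMonoidHom
    have hcc : ∀ x : K, L x = ∑ j ∈ range n, cc j * x ^ 2 ^ j := fun x => hcc0 x
    set T : Finset ℕ := (range n).filter (fun j => cc j ≠ 0) with hT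
    have hTne : T.Nonempty := by
      by_contra hne
      rw [Finset.not_nonempty_iff_eq_empty] at hne
      have h0 : L (1 : K) = 0 := by
        rw [hcc 1]
        apply Finset.sum_eq_zero
        intro j hj
        have : cc j = 0 := by
          by_contra hc
          have : j ∈ T := Finset.mem_filter.mpr ⟨hj, hc⟩
          rw [hne] at this
          exact absurd this (Finset.notMem_empty j)
        rw [this, zero_mul]
      exact one_ne_zero (L.injective (by rw [h0, map_zero]))
    set k := T.min' hTne with hk
    have hkT : k ∈ T := Finset.min'_mem T hTne
    have hkn : k < n := Finset.mem_range.mp (Finset.mem_filter.mp hkT).1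
    have hck : cc k ≠ 0 := (Finset.mem_filter.mp hkT).2
    -- coefficient identities
    have key : ∀ j, j < n → cc j ≠ 0 → ∀ a ∈ H, (a : K) ^ 2 ^ j = (a : K) ^ 2 ^ k := by
      intro j hjn hcj a ha
      obtain ⟨a', _, ha'⟩ := h1 a ha
      have hco : ∀ i < n, cc i * (a : K) ^ 2 ^ i = (a' : K) * cc i := by
        have h0 : ∀ x : K,
            ∑ i ∈ range n, (cc i * (a : K) ^ 2 ^ i - (a' : K) * cc i) * x ^ 2 ^ i = 0 := by
          intro x
          have e1 : L ((a : K) * x) = ∑ i ∈ range n, cc i * (a : K) ^ 2 ^ i * x ^ 2 ^ i := by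
            rw [hcc]
            exact Finset.sum_congr rfl fun i _ => by rw [mul_pow]; ring
          have e2 : (a' : K) * L x = ∑ i ∈ range n, (a' : K) * cc i * x ^ 2 ^ i := by
            rw [hcc, Finset.mul_sum]
            exact Finset.sum_congr rfl fun i _ => by ring
          have : ∑ i ∈ range n, (cc i * (a : K) ^ 2 ^ i - (a' : K) * cc i) * x ^ 2 ^ i
              = L ((a : K) * x) - (a' : K) * L x := by
            rw [e1, e2, ← Finset.sum_sub_distrib]
            exact Finset.sum_congr rfl fun i _ => by ring
          rw [this, ha' x, sub_self]
        intro i hi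
        exact sub_eq_zero.mp (lin_ind hcard _ h0 i hi)
      have hj' : (a : K) ^ 2 ^ j = (a' : K) := by
        have := hco j hjn
        rw [mul_comm ((a' : K)) (cc j)] at this
        exact mul_left_cancel₀ hcj this
      have hk' : (a : K) ^ 2 ^ k = (a' : K) := by
        have := hco k hkn
        rw [mul_comm ((a' : K)) (cc k)] at this
        exact mul_left_cancel₀ hck this
      rw [hj', hk']
    -- support is contained in {k, k+m, k+2m}
    have hsub : ∀ j ∈ T, j = k ∨ j = k + m ∨ j = k + 2 * m := by
      intro j hj
      have hjn : j < n := Finset.mem_range.mp (Finset.mem_filter.mp hj).1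
      have hcj : cc j ≠ 0 := (Finset.mem_filter.mp hj).2
      have hkj : k ≤ j := Finset.min'_le T j hj
      by_cases hjk : j = k
      · exact Or.inl hjk
      have hd0 : 0 < j - k := by omega
      have hda : ∀ a ∈ H, (a : K) ^ 2 ^ (j - k) = (a : K) := by
        intro a ha
        apply frob_inj k
        show ((a : K) ^ 2 ^ (j - k)) ^ 2 ^ k = (a : K) ^ 2 ^ k
        rw [← pow_mul, ← pow_add, show j - k + k = j by omega]
        exact key j hjn hcj a ha
      have hgcd : ∀ a ∈ H, (a : K) ^ 2 ^ Nat.gcd (j - k) m = (a : K) :=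
        fun a ha => aux_gcd _ _ _ (hda a ha) (hHm a ha)
      have hgm : Nat.gcd (j - k) m = m := hgen _ (Nat.gcd_dvd_right _ _) hgcd
      have hmd : m ∣ j - k := hgm ▸ Nat.gcd_dvd_left (j - k) m
      obtain ⟨t, ht⟩ := hmd
      have h5 : m * t < m * 3 := by omega
      have htlt : t < 3 := Nat.lt_of_mul_lt_mul_left h5
      interval_cases t <;> omega
    -- assemble the three coefficients
    refine ⟨k, cc k, if k + m < n then cc (k + m) else 0,
      if k + 2 * m < n then cc (k + 2 * m) else 0, fun x => ?_⟩
    rw [hcc x]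
    have hdist1 : k ≠ k + m := by omega
    have hdist2 : k ≠ k + 2 * m := by omega
    have hdist3 : k + m ≠ k + 2 * m := by omega
    set s : Finset ℕ := {k, k + m, k + 2 * m} with hs
    have hzero : ∀ j ∈ range n, j ∉ s → cc j = 0 := by
      intro j hj hjs
      by_contra hc
      have hjT : j ∈ T := Finset.mem_filter.mpr ⟨hj, hc⟩
      rcases hsub j hjT with h | h | h <;>
        · subst h
          simp [hs, Finset.mem_insert] at hjs
    have step1 : ∑ j ∈ range n, cc j * x ^ 2 ^ j
        = ∑ j ∈ (range n).filter (· ∈ s), cc j * x ^ 2 ^ j := by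
      symm
      apply Finset.sum_filter_of_ne
      intro j hj hne
      by_contra hjs
      rw [hzero j hj hjs, zero_mul] at hne
      exact hne rfl
    have step2 : ∑ j ∈ (range n).filter (· ∈ s), cc j * x ^ 2 ^ j
        = ∑ j ∈ s, if j ∈ range n then cc j * x ^ 2 ^ j else 0 := by
      rw [Finset.filter_mem_eq_inter, Finset.inter_comm, ← Finset.sum_ite_mem]
    have step3 : ∑ j ∈ s, (if j ∈ range n then cc j * x ^ 2 ^ j else 0)
        = (if k ∈ range n then cc k * x ^ 2 ^ k else 0)
          + (if k + m ∈ range n then cc (k + m) * x ^ 2 ^ (k + m) else 0)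
          + (if k + 2 * m ∈ range n then cc (k + 2 * m) * x ^ 2 ^ (k + 2 * m) else 0) := by
      rw [hs, Finset.sum_insert (by simp [hdist1, hdist2]; omega),
        Finset.sum_insert (by simp [hdist3]; omega), Finset.sum_singleton, add_assoc]
    rw [step1, step2, step3]
    congr 1
    · congr 1
      · rw [if_pos (Finset.mem_range.mpr hkn)]
      · simp only [Finset.mem_range]
        split_ifs with h
        · rfl
        · rw [zero_mul]
    · simp only [Finset.mem_range]
      split_ifs with h
      · rfl
      · rw [zero_mul]
  · rintro ⟨k, c₀, c₁, c₂, hL⟩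
    have hq : ∀ a : Kˣ, a ∈ H → ∀ x : K, L ((a : K) * x) = (a : K) ^ 2 ^ k * L x := by
      intro a ha x
      have h1 : (a : K) ^ 2 ^ (k + m) = (a : K) ^ 2 ^ k := by
        rw [add_comm k m, pow_add, pow_mul, hHm a ha]
      have h2 : (a : K) ^ 2 ^ (k + 2 * m) = (a : K) ^ 2 ^ k := by
        have h2m : (a : K) ^ 2 ^ (2 * m) = (a : K) := by
          rw [two_mul, pow_add, pow_mul, hHm a ha, hHm a ha]
        rw [add_comm k (2 * m), pow_add, pow_mul, h2m]
      rw [hL, hL, mul_pow, mul_pow, mul_pow, h1, h2]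
      ring
    constructor
    · intro a ha
      refine ⟨a ^ 2 ^ k, pow_mem ha _, fun x => ?_⟩
      rw [hq a ha x, Units.val_pow_eq_pow_val]
    · intro a' ha'
      have hinj2 : Function.Injective
          (fun b : ↥H => (⟨b.1 ^ 2 ^ k, pow_mem b.2 _⟩ : ↥H)) := by
        intro b c hbc
        have hval : ((b : Kˣ) : K) ^ 2 ^ k = ((c : Kˣ) : K) ^ 2 ^ k := by
          have := congrArg (fun z : ↥H => ((z : Kˣ) : K)) hbc
          simpa [Units.val_pow_eq_pow_val] using this
        exact Subtype.ext (Units.ext (frob_inj k hval))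
      obtain ⟨b, hb⟩ := (Finite.injective_iff_surjective.mp hinj2) ⟨a', ha'⟩
      refine ⟨b.1, b.2, fun x => ?_⟩
      rw [hq b.1 b.2 x]
      have hval : ((b : Kˣ) : K) ^ 2 ^ k = (a' : K) := by
        have := congrArg (fun z : ↥H => ((z : Kˣ) : K)) hb
        simpa [Units.val_pow_eq_pow_val] using this
      rw [hval]
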